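/- Let R be a field of characteristic 0 and X a symmetric simplicial R-module. Define h_n : C_nX → C_{n+1}X by h_n := Σ_{k=0}^n (−1)^k p_{n+1}^(k) ∘ s_k. Then for all n, ∂_{n+1} ∘ h_n + h_{n−1} ∘ ∂_n = id − p_n^(n); that is, h is a chain homotopy between the identity of C_*X and the chain map p_X = (p_n^(n)). -/

import Mathlib

open CategoryTheory Opposite
noncomputable section
variable {R : Type} [Field R] [CharZero R]

/-- The object `Fin m` in the category of finite types. -/
abbrev fobj (m : ℕ) : FintypeCat := FintypeCat.of (Fin m)

variable (X : FintypeCatᵒᵖ ⥤ ModuleCat R)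

/-- The `R`-module `X(Fin m)`; for `m = n+1` this is the module `X_n` of `n`-simplices. -/
abbrev MM (m : ℕ) := X.obj (op (fobj m))

/-- `X` applied (contravariantly) to a map `f : Fin m → Fin k`. -/
def act {m k : ℕ} (f : Fin m → Fin k) : MM X k →ₗ[R] MM X m :=
  (X.map (Quiver.Hom.op (show fobj m ⟶ fobj k from FintypeCat.homMk f))).hom

/-- The face map `d_i : X_n → X_{n-1}`, i.e. `X` applied to `Fin.succAbove i`. -/
def face (n : ℕ) (i : Fin (n + 1)) : MM X (n + 1) →ₗ[R] MM X n :=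
  act X (Fin.succAbove i)

/-- The alternating-sum differential `∂_n : X_n → X_{n-1}`. -/
def del (n : ℕ) : MM X (n + 1) →ₗ[R] MM X n :=
  ∑ i : Fin (n + 1), ((-1 : R) ^ (i : ℕ)) • face X n i

/-- The action of a permutation `t` on `X_n`, `t • x := X(t)(x)`. -/
def pact (m : ℕ) (t : Equiv.Perm (Fin m)) : MM X m →ₗ[R] MM X m :=
  act X (t : Fin m → Fin m)

/-- The sign of a permutation, as an element of `R`. -/
def sgnR (R : Type) [Field R] {m : ℕ} (t : Equiv.Perm (Fin m)) : R :=
  ((Equiv.Perm.sign t : ℤ) : R)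

/-- The subgroup `S_{[k]}` of permutations of `Fin m` fixing every `j > k`, as a finset. -/
def Sk (m k : ℕ) : Finset (Equiv.Perm (Fin m)) :=
  Finset.univ.filter (fun t => ∀ j : Fin m, k < (j : ℕ) → t j = j)

/-- The map `p_{m-1}^{(k)} : X(Fin m) → X(Fin m)`,
`x ↦ (1/(k+1)!) ∑_{t ∈ S_{[k]}} sgn(t) • (t • x)`. -/
def pmap (m k : ℕ) : MM X m →ₗ[R] MM X m :=
  ((Nat.factorial (k + 1) : R)⁻¹) • ∑ t ∈ Sk m k, sgnR R t • pact X m t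

/-- The full projection `p_{m-1}^{(m-1)} : X(Fin m) → X(Fin m)` (averaging over all of
`Perm (Fin m)` with signs). -/
def pfull (m : ℕ) : MM X m →ₗ[R] MM X m :=
  ((Nat.factorial m : R)⁻¹) • ∑ t : Equiv.Perm (Fin m), sgnR R t • pact X m t

/-- The symmetry submodule `sDeg`, spanned by all `x - sgn(t) • (t • x)`. -/
def sDeg (m : ℕ) : Submodule R (MM X m) :=
  Submodule.span R
    {y | ∃ (x : MM X m) (t : Equiv.Perm (Fin m)), y = x - sgnR R t • pact X m t x}

/-- The submodule `P`, spanned by all `∑_t sgn(t) • (t • x)`. -/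
def Psub (m : ℕ) : Submodule R (MM X m) :=
  Submodule.span R
    {y | ∃ x : MM X m, y = ∑ t : Equiv.Perm (Fin m), sgnR R t • pact X m t x}

/-- The degeneracy map `s_k : X(Fin m) → X(Fin (m+1))`, i.e. `X` applied to the monotone
surjection `Fin.predAbove k : Fin (m+1) → Fin m` taking the value `k` twice. -/
def degen (m : ℕ) (k : Fin m) : MM X m →ₗ[R] MM X (m + 1) :=
  act X (fun j : Fin (m + 1) => Fin.predAbove k j)

/-- The chain homotopy `h`, on `X(Fin m)` given by `∑_{k=0}^{m-1} (-1)^k p^{(k)} ∘ s_k`. -/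
def hmap (m : ℕ) : MM X m →ₗ[R] MM X (m + 1) :=
  ∑ k : Fin m, ((-1 : R) ^ (k : ℕ)) • ((pmap X (m + 1) (k : ℕ)) ∘ₗ degen X m k)

end

noncomputable section
variable {R : Type} [Field R] [CharZero R]
variable (X : FintypeCatᵒᵖ ⥤ ModuleCat R)

set_option linter.unusedSectionVars false

-- ====== aux ======

lemma act_comp {a b c : ℕ} (f : Fin a → Fin b) (g : Fin b → Fin c) :
    act X f ∘ₗ act X g = act X (g ∘ f) := by
  unfold act
  rw [show (Quiver.Hom.op (show fobj a ⟶ fobj c from FintypeCat.homMk (g ∘ f)))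
      = Quiver.Hom.op (show fobj b ⟶ fobj c from FintypeCat.homMk g) ≫
        Quiver.Hom.op (show fobj a ⟶ fobj b from FintypeCat.homMk f) from rfl, X.map_comp]
  rfl

lemma act_id {a : ℕ} : act X (id : Fin a → Fin a) = LinearMap.id := by
  unfold act
  rw [show (Quiver.Hom.op (show fobj a ⟶ fobj a from FintypeCat.homMk id)) = 𝟙 _ from rfl, X.map_id]
  rfl

/-- extension of a permutation of `Fin k` to a function `Fin m → Fin m`. -/
def extFun (m k : ℕ) (h : k ≤ m) (t : Equiv.Perm (Fin k)) : Fin m → Fin m :=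
  fun a => if h' : (a : ℕ) < k then Fin.castLE h (t ⟨a, h'⟩) else a

def extPerm (m k : ℕ) (h : k ≤ m) (t : Equiv.Perm (Fin k)) : Equiv.Perm (Fin m) :=
  t.viaFintypeEmbedding (Fin.castLEEmb h)

lemma castLEEmb_range {m k : ℕ} (h : k ≤ m) (b : Fin m) :
    b ∈ Set.range (Fin.castLEEmb h) ↔ (b : ℕ) < k := by
  constructor
  · rintro ⟨a, rfl⟩; exact a.2
  · intro hb; exact ⟨⟨b, hb⟩, rfl⟩

lemma extPerm_coe (m k : ℕ) (h : k ≤ m) (t : Equiv.Perm (Fin k)) :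
    ⇑(extPerm m k h t) = extFun m k h t := by
  funext a
  unfold extFun
  by_cases h' : (a : ℕ) < k
  · rw [dif_pos h']
    have : a = (Fin.castLEEmb h) ⟨a, h'⟩ := by
      simp [Fin.castLEEmb, Fin.ext_iff]
    conv_lhs => rw [this]
    rw [extPerm, Equiv.Perm.viaFintypeEmbedding_apply_image]
    rfl
  · rw [dif_neg h']
    exact Equiv.Perm.viaFintypeEmbedding_apply_notMem_range _ _
      (by rw [castLEEmb_range]; exact h')

lemma sgnR_extPerm (m k : ℕ) (h : k ≤ m) (t : Equiv.Perm (Fin k)) :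
    sgnR R (extPerm m k h t) = sgnR R t := by
  unfold sgnR extPerm
  rw [Equiv.Perm.viaFintypeEmbedding_sign]

lemma extPerm_mem_Sk (m k : ℕ) (h : k + 1 ≤ m) (t : Equiv.Perm (Fin (k+1))) :
    extPerm m (k+1) h t ∈ Sk m k := by
  simp only [Sk, Finset.mem_filter, Finset.mem_univ, true_and]
  intro j hj
  change extPerm m (k+1) h t j = j
  rw [extPerm_coe]
  unfold extFun
  rw [dif_neg (by omega)]

lemma mem_Sk_lt {m k : ℕ} {v : Equiv.Perm (Fin m)} (hv : v ∈ Sk m k)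
    {a : Fin m} (ha : (a : ℕ) < k + 1) : ((v a : Fin m) : ℕ) < k + 1 := by
  simp only [Sk, Finset.mem_filter, Finset.mem_univ, true_and] at hv
  by_contra hc
  have := hv (v a) (by omega)
  have := v.injective this
  omega

lemma pmap_eq (m k : ℕ) (h : k + 1 ≤ m) :
    pmap X m k = ((Nat.factorial (k + 1) : R)⁻¹) •
      ∑ t : Equiv.Perm (Fin (k+1)), sgnR R t • act X (extFun m (k+1) h t) := by
  unfold pmap
  congr 1
  refine (Finset.sum_bij (fun t _ => extPerm m (k+1) h t) ?_ ?_ ?_ ?_).symm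
  · intro t _; exact extPerm_mem_Sk m k h t
  · intro t1 _ t2 _ heq
    ext a
    have h2 := congrArg (fun (v : Equiv.Perm (Fin m)) => ((v (Fin.castLE h a) : Fin m) : ℕ)) heq
    simp only [extPerm_coe, extFun] at h2
    rw [dif_pos (by simpa using a.2), dif_pos (by simpa using a.2)] at h2
    simpa [Fin.coe_castLE, Fin.eta] using h2
  · intro v hv
    -- construct restriction
    have hmap : ∀ a : Fin (k+1), ((v (Fin.castLE h a) : Fin m) : ℕ) < k + 1 := by
      intro a; exact mem_Sk_lt hv (by exact a.2)
    set f0 : Fin (k+1) → Fin (k+1) := fun a => ⟨(v (Fin.castLE h a) : Fin m), hmap a⟩ with hf0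
    have hinj : Function.Injective f0 := by
      intro a b hab
      have : (v (Fin.castLE h a) : Fin m) = v (Fin.castLE h b) := by
        have := congrArg Fin.val hab
        simp only [hf0] at this
        exact Fin.ext this
      have := v.injective this
      exact Fin.castLE_injective h this
    set tt : Equiv.Perm (Fin (k+1)) :=
      Equiv.ofBijective f0 (Finite.injective_iff_bijective.mp hinj) with htt
    refine ⟨tt, Finset.mem_univ _, ?_⟩
    ext a
    rw [show ⇑(extPerm m (k+1) h tt) = extFun m (k+1) h tt from extPerm_coe m (k+1) h tt]
    unfold extFun
    by_cases h' : (a : ℕ) < k + 1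
    · rw [dif_pos h']
      have h3 : tt ⟨a, h'⟩ = f0 ⟨a, h'⟩ := rfl
      rw [h3]
      have : Fin.castLE h (⟨(a:ℕ), h'⟩ : Fin (k+1)) = a := by simp [Fin.ext_iff]
      simp [hf0, Fin.ext_iff, this]
    · rw [dif_neg h']
      simp only [Sk, Finset.mem_filter, Finset.mem_univ, true_and] at hv
      rw [hv a (by omega)]
  · intro t _
    rw [sgnR_extPerm]
    congr 1
    unfold pact
    rw [extPerm_coe]

-- ====== batch 2: Fin value lemmas and the decomposition equivalence ======

lemma succAbove_val {m : ℕ} (i : Fin (m+1)) (a : Fin m) :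
    ((Fin.succAbove i a : Fin (m+1)) : ℕ) = if (a:ℕ) < (i:ℕ) then (a:ℕ) else (a:ℕ)+1 := by
  rw [Fin.succAbove]
  by_cases h : (a:ℕ) < (i:ℕ)
  · rw [if_pos (by simpa [Fin.lt_def] using h), if_pos h]; rfl
  · rw [if_neg (by simpa [Fin.lt_def] using h), if_neg h]; rfl

lemma predAbove_val {m : ℕ} (p : Fin m) (j : Fin (m+1)) :
    ((Fin.predAbove p j : Fin m) : ℕ) = if (p:ℕ) < (j:ℕ) then (j:ℕ)-1 else (j:ℕ) := by
  rw [Fin.predAbove]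
  by_cases h : (p:ℕ) < (j:ℕ)
  · rw [dif_pos (by simpa [Fin.lt_def] using h), if_pos h]; rfl
  · rw [dif_neg (by simpa [Fin.lt_def] using h), if_neg h]; rfl

lemma extFun_val_lt {m k : ℕ} (h : k ≤ m) (t : Equiv.Perm (Fin k)) {a : Fin m}
    (h' : (a:ℕ) < k) : ((extFun m k h t a : Fin m) : ℕ) = ((t ⟨a, h'⟩ : Fin k) : ℕ) := by
  unfold extFun; rw [dif_pos h']; rfl

lemma extFun_val_ge {m k : ℕ} (h : k ≤ m) (t : Equiv.Perm (Fin k)) {a : Fin m}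
    (h' : ¬ (a:ℕ) < k) : extFun m k h t a = a := by
  unfold extFun; rw [dif_neg h']

lemma cycleRange_inv_val {k : ℕ} (i x : Fin (k+1)) (hx : 1 ≤ (x:ℕ)) :
    (((Fin.cycleRange i)⁻¹ x : Fin (k+1)) : ℕ) =
      if (x:ℕ) ≤ (i:ℕ) then (x:ℕ) - 1 else (x:ℕ) := by
  by_cases hxi : (x:ℕ) ≤ (i:ℕ)
  · have h1 : Fin.cycleRange i ⟨(x:ℕ)-1, by omega⟩ = x := by
      rw [Fin.cycleRange_of_lt (show (⟨(x:ℕ)-1, by omega⟩ : Fin (k+1)) < i by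
        rw [Fin.lt_def]; show (x:ℕ)-1 < (i:ℕ); omega)]
      apply Fin.ext
      rw [Fin.val_add_one_of_lt (show (⟨(x:ℕ)-1, by omega⟩ : Fin (k+1)) < Fin.last k by
        rw [Fin.lt_def]; show (x:ℕ)-1 < k; omega)]
      show (x:ℕ)-1+1 = (x:ℕ); omega
    have h2 : (Fin.cycleRange i)⁻¹ x = ⟨(x:ℕ)-1, by omega⟩ := by
      rw [show (Fin.cycleRange i)⁻¹ = (Fin.cycleRange i).symm from rfl,
        Equiv.symm_apply_eq]
      exact h1.symm
    rw [h2, if_pos hxi]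
  · have h1 : Fin.cycleRange i x = x :=
      Fin.cycleRange_of_gt (by rw [Fin.lt_def]; omega)
    have h2 : (Fin.cycleRange i)⁻¹ x = x := by
      nth_rewrite 1 [← h1]; exact Equiv.symm_apply_apply _ _
    rw [h2, if_neg hxi]

/-- shift of a permutation: fixes `0`, acts as `u` on successors. -/
def shiftP {k : ℕ} (u : Equiv.Perm (Fin k)) : Equiv.Perm (Fin (k+1)) :=
  Equiv.Perm.decomposeFin.symm (0, u)

lemma shiftP_zero {k : ℕ} (u : Equiv.Perm (Fin k)) : shiftP u 0 = 0 :=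
  Equiv.Perm.decomposeFin_symm_apply_zero 0 u

lemma shiftP_succ {k : ℕ} (u : Equiv.Perm (Fin k)) (b : Fin k) :
    shiftP u b.succ = (u b).succ := by
  rw [shiftP, Equiv.Perm.decomposeFin_symm_apply_succ, Equiv.swap_self]
  rfl

lemma sign_shiftP {k : ℕ} (u : Equiv.Perm (Fin k)) :
    Equiv.Perm.sign (shiftP u) = Equiv.Perm.sign u := by
  rw [shiftP, Equiv.Perm.decomposeFin.symm_sign, if_pos rfl, one_mul]

/-- decomposition of a permutation of `Fin (k+1)` as a cycle times a shift. -/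
def EE (k : ℕ) : Fin (k+1) × Equiv.Perm (Fin k) ≃ Equiv.Perm (Fin (k+1)) where
  toFun p := (Fin.cycleRange p.1)⁻¹ * shiftP p.2
  invFun t := (t 0, (Equiv.Perm.decomposeFin (Fin.cycleRange (t 0) * t)).2)
  left_inv := by
    rintro ⟨i, u⟩
    have h0 : ((Fin.cycleRange i)⁻¹ * shiftP u) 0 = i := by
      have : ((Fin.cycleRange i)⁻¹ * shiftP u) 0 = (Fin.cycleRange i)⁻¹ 0 := by
        rw [Equiv.Perm.mul_apply, shiftP_zero]
      rw [this, ← Fin.cycleRange_self i]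
      exact Equiv.symm_apply_apply _ _
    simp only [h0]
    have h1 : Fin.cycleRange i * ((Fin.cycleRange i)⁻¹ * shiftP u) = shiftP u :=
      mul_inv_cancel_left _ _
    rw [h1, shiftP, Equiv.apply_symm_apply]
  right_inv := by
    intro t
    have hfst : ∀ s : Equiv.Perm (Fin (k+1)), (Equiv.Perm.decomposeFin s).1 = s 0 := by
      intro s
      conv_rhs => rw [← Equiv.symm_apply_apply Equiv.Perm.decomposeFin s]
      rw [show Equiv.Perm.decomposeFin.symm (Equiv.Perm.decomposeFin s)
          = Equiv.Perm.decomposeFin.symm ((Equiv.Perm.decomposeFin s).1,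
              (Equiv.Perm.decomposeFin s).2) from rfl]
      rw [Equiv.Perm.decomposeFin_symm_apply_zero]
    simp only
    set s : Equiv.Perm (Fin (k+1)) := Fin.cycleRange (t 0) * t with hs
    have h0 : s 0 = 0 := by rw [hs, Equiv.Perm.mul_apply, Fin.cycleRange_self]
    have h1 : (Equiv.Perm.decomposeFin s).1 = 0 := by rw [hfst]; exact h0
    have h2 : Equiv.Perm.decomposeFin s
        = ((0 : Fin (k+1)), (Equiv.Perm.decomposeFin s).2) := by
      rw [← h1]
    have h3 : shiftP (Equiv.Perm.decomposeFin s).2 = s := by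
      rw [shiftP, ← h2, Equiv.symm_apply_apply]
    rw [h3, hs]
    exact inv_mul_cancel_left _ _

lemma EE_zero {k : ℕ} (i : Fin (k+1)) (u : Equiv.Perm (Fin k)) :
    EE k (i, u) 0 = i := by
  show ((Fin.cycleRange i)⁻¹ * shiftP u) 0 = i
  rw [Equiv.Perm.mul_apply, shiftP_zero, ← Fin.cycleRange_self i]
  exact Equiv.symm_apply_apply _ _

lemma EE_succ_val {k : ℕ} (i : Fin (k+1)) (u : Equiv.Perm (Fin k)) (b : Fin k) :
    ((EE k (i, u) b.succ : Fin (k+1)) : ℕ) =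
      if ((u b : Fin k) : ℕ) + 1 ≤ (i:ℕ) then ((u b : Fin k) : ℕ)
      else ((u b : Fin k) : ℕ) + 1 := by
  show (((Fin.cycleRange i)⁻¹ * shiftP u) b.succ : ℕ) = _
  rw [Equiv.Perm.mul_apply, shiftP_succ]
  rw [cycleRange_inv_val i (u b).succ (by simp)]
  simp [Fin.val_succ]

lemma sgnR_EE {k : ℕ} (i : Fin (k+1)) (u : Equiv.Perm (Fin k)) :
    sgnR R (EE k (i, u)) = (-1 : R)^(i:ℕ) * sgnR R u := by
  unfold sgnR
  show ((Equiv.Perm.sign ((Fin.cycleRange i)⁻¹ * shiftP u) : ℤ) : R) = _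
  rw [map_mul, Equiv.Perm.sign_inv, Fin.sign_cycleRange, sign_shiftP]
  push_cast [Units.val_mul]
  ring
-- ====== batch 3: function identities ======

lemma extFun_val_ge' {m k : ℕ} (h : k ≤ m) (t : Equiv.Perm (Fin k)) {a : Fin m}
    (h' : ¬ (a:ℕ) < k) : ((extFun m k h t a : Fin m) : ℕ) = (a:ℕ) := by
  rw [extFun_val_ge h t h']

lemma funL1 {m k : ℕ} (hk : k ≤ m) (i : Fin (m+1)) (hik : (i:ℕ) ≤ k)
    (t : Equiv.Perm (Fin (k+1))) :
    extFun (m+1) (k+1) (by omega) t ∘ Fin.succAbove i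
      = extFun (m+1) (k+1) (by omega)
          (t * (Fin.cycleRange (⟨(i:ℕ), by omega⟩ : Fin (k+1)))⁻¹)
          ∘ Fin.succAbove (0 : Fin (m+1)) := by
  funext a; apply Fin.ext; simp only [Function.comp_apply]
  have h0 : ((Fin.succAbove (0:Fin (m+1)) a : Fin (m+1)) : ℕ) = (a:ℕ)+1 := by
    rw [succAbove_val]; simp
  by_cases hak : (a:ℕ) < k
  · have hv : ((Fin.succAbove i a : Fin (m+1)) : ℕ) < k+1 := by
      rw [succAbove_val]; split <;> omega
    have h0lt : ((Fin.succAbove (0:Fin (m+1)) a : Fin (m+1)) : ℕ) < k+1 := by omega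
    rw [extFun_val_lt _ t hv, extFun_val_lt _ _ h0lt]
    have harg : (⟨((Fin.succAbove i a : Fin (m+1)) : ℕ), hv⟩ : Fin (k+1))
        = (Fin.cycleRange (⟨(i:ℕ), by omega⟩ : Fin (k+1)))⁻¹
            ⟨((Fin.succAbove (0:Fin (m+1)) a : Fin (m+1)) : ℕ), h0lt⟩ := by
      apply Fin.ext
      rw [cycleRange_inv_val _ _ (by simp only [Fin.val_mk]; omega)]
      simp only [succAbove_val, Fin.val_mk, Fin.val_zero, Nat.not_lt_zero, if_false]
      split_ifs <;> omega
    rw [harg, Equiv.Perm.mul_apply]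
  · have hv1 : ¬ ((Fin.succAbove i a : Fin (m+1)) : ℕ) < k+1 := by
      rw [succAbove_val]; split <;> omega
    have hv2 : ¬ ((Fin.succAbove (0:Fin (m+1)) a : Fin (m+1)) : ℕ) < k+1 := by omega
    rw [extFun_val_ge' _ t hv1, extFun_val_ge' _ _ hv2]
    simp only [succAbove_val, Fin.val_zero, Nat.not_lt_zero, if_false]
    split_ifs <;> omega

lemma funL2 {m k : ℕ} (h1 : k+1 ≤ m) (i : Fin (m+1)) (hik : k < (i:ℕ))
    (t : Equiv.Perm (Fin (k+1))) :
    extFun (m+1) (k+1) (by omega) t ∘ Fin.succAbove i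
      = Fin.succAbove i ∘ extFun m (k+1) h1 t := by
  funext a; apply Fin.ext; simp only [Function.comp_apply]
  by_cases hak : (a:ℕ) < k+1
  · have hsa : ((Fin.succAbove i a : Fin (m+1)) : ℕ) = (a:ℕ) := by
      rw [succAbove_val, if_pos (by omega)]
    have hlt : ((Fin.succAbove i a : Fin (m+1)) : ℕ) < k+1 := by omega
    rw [extFun_val_lt _ t hlt]
    have harg : (⟨((Fin.succAbove i a : Fin (m+1)):ℕ), hlt⟩ : Fin (k+1))
        = ⟨(a:ℕ), hak⟩ := Fin.ext hsa
    rw [harg]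
    have hR : ((extFun m (k+1) h1 t a : Fin m) : ℕ) = ((t ⟨(a:ℕ), hak⟩ : Fin (k+1)) : ℕ) :=
      extFun_val_lt h1 t hak
    rw [succAbove_val, hR, if_pos (by have := (t ⟨(a:ℕ),hak⟩).2; omega)]
  · have h2 : extFun m (k+1) h1 t a = a := extFun_val_ge h1 t hak
    rw [h2]
    have hv1 : ¬ ((Fin.succAbove i a : Fin (m+1)) : ℕ) < k+1 := by
      rw [succAbove_val]; split <;> omega
    rw [extFun_val_ge' _ t hv1]

lemma funL3 {m : ℕ} (k : Fin m) :
    (fun j : Fin (m+1) => Fin.predAbove k j) ∘ Fin.succAbove k.succ = id := by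
  funext a; apply Fin.ext; simp only [Function.comp_apply, id_eq]
  rw [predAbove_val]
  simp only [succAbove_val, Fin.val_succ]
  split_ifs <;> omega

lemma funL3' {m : ℕ} (k : Fin m) :
    (fun j : Fin (m+1) => Fin.predAbove k j) ∘ Fin.succAbove (Fin.castSucc k) = id := by
  funext a; apply Fin.ext; simp only [Function.comp_apply, id_eq]
  rw [predAbove_val]
  simp only [succAbove_val, Fin.coe_castSucc]
  split_ifs <;> omega

lemma funL4 {n k j : ℕ} (hk : k < n) (hj : j < n+1) (hkj : k+1 ≤ j) (hj2 : j+1 < n+2) :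
    (fun a : Fin (n+2) => Fin.predAbove (⟨k, by omega⟩ : Fin (n+1)) a)
        ∘ Fin.succAbove (⟨j+1, hj2⟩ : Fin (n+2))
      = Fin.succAbove (⟨j, hj⟩ : Fin (n+1))
        ∘ (fun a : Fin (n+1) => Fin.predAbove (⟨k, hk⟩ : Fin n) a) := by
  funext a; apply Fin.ext; simp only [Function.comp_apply]
  rw [predAbove_val, succAbove_val]
  simp only [succAbove_val, predAbove_val, Fin.val_mk]
  split_ifs <;> omega

lemma fid1 {n kp : ℕ} (hkp : kp < n) (u : Equiv.Perm (Fin (kp+1))) :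
    (fun a : Fin (n+2) => Fin.predAbove (⟨kp+1, by omega⟩ : Fin (n+1)) a)
        ∘ extFun (n+2) (kp+2) (by omega) (EE (kp+1) (Fin.last (kp+1), u))
        ∘ Fin.succAbove (0 : Fin (n+2))
      = extFun (n+1) (kp+1) (by omega) u := by
  funext a; apply Fin.ext; simp only [Function.comp_apply]
  have h0v : ((Fin.succAbove (0 : Fin (n+2)) a : Fin (n+2)) : ℕ) = (a:ℕ)+1 := by
    rw [succAbove_val]; simp
  by_cases hak : (a:ℕ) < kp+1
  · have hlt : ((Fin.succAbove (0:Fin (n+2)) a : Fin (n+2)) : ℕ) < kp+2 := by omega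
    have harg : (⟨((Fin.succAbove (0:Fin (n+2)) a : Fin (n+2)) : ℕ), hlt⟩ : Fin (kp+2))
        = Fin.succ ⟨(a:ℕ), hak⟩ := by
      apply Fin.ext; rw [h0v]; rfl
    have hE : ((extFun (n+2) (kp+2) (by omega) (EE (kp+1) (Fin.last (kp+1), u))
          (Fin.succAbove (0:Fin (n+2)) a) : Fin (n+2)) : ℕ)
        = ((u ⟨(a:ℕ), hak⟩ : Fin (kp+1)) : ℕ) := by
      rw [extFun_val_lt _ _ hlt, harg, EE_succ_val,
        if_pos (by have := (u ⟨(a:ℕ),hak⟩).2; simp only [Fin.val_last]; omega)]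
    rw [predAbove_val, hE, extFun_val_lt _ u hak]
    rw [if_neg (by have := (u ⟨(a:ℕ),hak⟩).2; simp only [Fin.val_mk]; omega)]
  · have hge : ¬ ((Fin.succAbove (0:Fin (n+2)) a : Fin (n+2)) : ℕ) < kp+2 := by omega
    have hE : extFun (n+2) (kp+2) (by omega) (EE (kp+1) (Fin.last (kp+1), u))
          (Fin.succAbove (0:Fin (n+2)) a) = Fin.succAbove (0:Fin (n+2)) a :=
      extFun_val_ge _ _ hge
    rw [hE, extFun_val_ge' _ u hak, predAbove_val, h0v]
    rw [if_pos (by simp only [Fin.val_mk]; omega)]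
    omega

lemma fid2 {n kp : ℕ} (hkp : kp < n) (i0 : Fin (kp+1)) (u : Equiv.Perm (Fin (kp+1))) :
    (fun a : Fin (n+2) => Fin.predAbove (⟨kp+1, by omega⟩ : Fin (n+1)) a)
        ∘ extFun (n+2) (kp+2) (by omega) (EE (kp+1) (Fin.castSucc i0, u))
        ∘ Fin.succAbove (0 : Fin (n+2))
      = Fin.succAbove (⟨(i0:ℕ), by omega⟩ : Fin (n+1))
        ∘ (fun a : Fin (n+1) => Fin.predAbove (⟨kp, hkp⟩ : Fin n) a)
        ∘ extFun (n+1) (kp+1) (by omega) u := by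
  funext a; apply Fin.ext; simp only [Function.comp_apply]
  have hi0 : (i0:ℕ) < kp+1 := i0.2
  have h0v : ((Fin.succAbove (0 : Fin (n+2)) a : Fin (n+2)) : ℕ) = (a:ℕ)+1 := by
    rw [succAbove_val]; simp
  by_cases hak : (a:ℕ) < kp+1
  · have hlt : ((Fin.succAbove (0:Fin (n+2)) a : Fin (n+2)) : ℕ) < kp+2 := by omega
    have harg : (⟨((Fin.succAbove (0:Fin (n+2)) a : Fin (n+2)) : ℕ), hlt⟩ : Fin (kp+2))
        = Fin.succ ⟨(a:ℕ), hak⟩ := by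
      apply Fin.ext; rw [h0v]; rfl
    have hc2 : ((u ⟨(a:ℕ), hak⟩ : Fin (kp+1)) : ℕ) < kp+1 := (u ⟨(a:ℕ),hak⟩).2
    have hE : ((extFun (n+2) (kp+2) (by omega) (EE (kp+1) (Fin.castSucc i0, u))
          (Fin.succAbove (0:Fin (n+2)) a) : Fin (n+2)) : ℕ)
        = if ((u ⟨(a:ℕ), hak⟩ : Fin (kp+1)) : ℕ) + 1 ≤ (i0:ℕ)
            then ((u ⟨(a:ℕ), hak⟩ : Fin (kp+1)) : ℕ)
            else ((u ⟨(a:ℕ), hak⟩ : Fin (kp+1)) : ℕ) + 1 := by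
      rw [extFun_val_lt _ _ hlt, harg, EE_succ_val]
      simp only [Fin.coe_castSucc]
    rw [predAbove_val, hE, succAbove_val, predAbove_val, extFun_val_lt _ u hak]
    simp only [Fin.val_mk]
    split_ifs <;> omega
  · have hge : ¬ ((Fin.succAbove (0:Fin (n+2)) a : Fin (n+2)) : ℕ) < kp+2 := by omega
    have hE : extFun (n+2) (kp+2) (by omega) (EE (kp+1) (Fin.castSucc i0, u))
          (Fin.succAbove (0:Fin (n+2)) a) = Fin.succAbove (0:Fin (n+2)) a :=
      extFun_val_ge _ _ hge
    rw [hE, extFun_val_ge _ u hak]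
    simp only [predAbove_val, succAbove_val, h0v, Fin.val_mk, Fin.val_zero, Nat.not_lt_zero, if_false]
    split_ifs <;> omega

-- ====== batch 4: operator lemmas ======

lemma compSum {ι M₁ M₂ M₃ : Type*} [AddCommMonoid M₁] [AddCommMonoid M₂] [AddCommMonoid M₃]
    [Module R M₁] [Module R M₂] [Module R M₃]
    (f : M₂ →ₗ[R] M₃) (s : Finset ι) (g : ι → (M₁ →ₗ[R] M₂)) :
    f ∘ₗ (∑ i ∈ s, g i) = ∑ i ∈ s, f ∘ₗ g i := by
  ext x
  simp [LinearMap.sum_apply, map_sum]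

lemma sumComp {ι M₁ M₂ M₃ : Type*} [AddCommMonoid M₁] [AddCommMonoid M₂] [AddCommMonoid M₃]
    [Module R M₁] [Module R M₂] [Module R M₃]
    (f : M₁ →ₗ[R] M₂) (s : Finset ι) (g : ι → (M₂ →ₗ[R] M₃)) :
    (∑ i ∈ s, g i) ∘ₗ f = ∑ i ∈ s, g i ∘ₗ f := by
  ext x
  simp [LinearMap.sum_apply]

lemma sgnR_one {m : ℕ} : sgnR R (1 : Equiv.Perm (Fin m)) = 1 := by
  unfold sgnR; simp

lemma sgnR_mul {m : ℕ} (s t : Equiv.Perm (Fin m)) :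
    sgnR R (s * t) = sgnR R s * sgnR R t := by
  unfold sgnR; rw [map_mul]; push_cast [Units.val_mul]; ring

lemma sgnR_cycleRange_inv {k : ℕ} (i : Fin (k+1)) :
    sgnR R ((Fin.cycleRange i)⁻¹) = (-1:R)^(i:ℕ) := by
  unfold sgnR
  rw [Equiv.Perm.sign_inv, Fin.sign_cycleRange]
  push_cast
  ring

lemma pmap_zero (m : ℕ) (h : 1 ≤ m) : pmap X m 0 = LinearMap.id := by
  rw [pmap_eq X m 0 h]
  have huniv : (Finset.univ : Finset (Equiv.Perm (Fin 1))) = {(1 : Equiv.Perm (Fin 1))} := by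
    apply Finset.eq_singleton_iff_unique_mem.mpr
    exact ⟨Finset.mem_univ _, fun t _ => Equiv.ext (fun x => Subsingleton.elim _ _)⟩
  rw [huniv, Finset.sum_singleton, sgnR_one, one_smul]
  have hfun : extFun m 1 h 1 = id := by
    funext a
    unfold extFun
    by_cases h' : (a:ℕ) < 1
    · rw [dif_pos h']
      rfl
    · rw [dif_neg h']; rfl
  rw [hfun, act_id]
  norm_num

lemma pfull_eq (m : ℕ) : pfull X (m+1) = pmap X (m+1) m := by
  unfold pfull pmap
  congr 1
  have : Sk (m+1) m = Finset.univ := by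
    apply Finset.eq_univ_iff_forall.mpr
    intro t
    simp only [Sk, Finset.mem_filter, Finset.mem_univ, true_and]
    intro j hj
    exact absurd hj (by omega)
  rw [this]

lemma face_pmap_comm {m k : ℕ} (h1 : k+1 ≤ m) (i : Fin (m+1)) (hik : k < (i:ℕ)) :
    face X m i ∘ₗ pmap X (m+1) k = pmap X m k ∘ₗ face X m i := by
  rw [pmap_eq X (m+1) k (by omega), pmap_eq X m k h1]
  rw [LinearMap.comp_smul, LinearMap.smul_comp]
  congr 1
  rw [compSum, sumComp]
  apply Finset.sum_congr rfl
  intro t _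
  rw [LinearMap.comp_smul, LinearMap.smul_comp]
  congr 1
  unfold face
  rw [act_comp, act_comp]
  congr 1
  exact funL2 h1 i hik t

lemma face_pmap_L1 {m k : ℕ} (hk : k ≤ m) (i : Fin (m+1)) (hik : (i:ℕ) ≤ k) :
    face X m i ∘ₗ pmap X (m+1) k = ((-1:R)^(i:ℕ)) • (face X m 0 ∘ₗ pmap X (m+1) k) := by
  rw [pmap_eq X (m+1) k (by omega)]
  rw [LinearMap.comp_smul, LinearMap.comp_smul, smul_comm]
  congr 1
  unfold face
  rw [compSum, compSum]
  set d : Equiv.Perm (Fin (k+1)) := (Fin.cycleRange (⟨(i:ℕ), by omega⟩ : Fin (k+1)))⁻¹ with hd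
  have step1 : ∀ t : Equiv.Perm (Fin (k+1)),
      act X (Fin.succAbove i) ∘ₗ (sgnR R t • act X (extFun (m+1) (k+1) (by omega) t))
        = sgnR R t • act X (extFun (m+1) (k+1) (by omega) (t * d) ∘
            Fin.succAbove (0 : Fin (m+1))) := by
    intro t
    rw [LinearMap.comp_smul, act_comp]
    congr 1
    rw [funL1 hk i hik t]
  rw [Finset.sum_congr rfl (fun t _ => step1 t)]
  have step2 : ∀ t : Equiv.Perm (Fin (k+1)),
      act X (Fin.succAbove (0:Fin (m+1))) ∘ₗ (sgnR R t • act X (extFun (m+1) (k+1) (by omega) t))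
        = sgnR R t • act X (extFun (m+1) (k+1) (by omega) t ∘
            Fin.succAbove (0 : Fin (m+1))) := by
    intro t
    rw [LinearMap.comp_smul, act_comp]
  rw [Finset.sum_congr rfl (fun t _ => step2 t)]
  rw [Finset.smul_sum]
  apply Fintype.sum_equiv (Equiv.mulRight d)
  intro t
  simp only [Equiv.coe_mulRight]
  rw [smul_smul, sgnR_mul, hd, sgnR_cycleRange_inv]
  congr 1
  simp only [Fin.val_mk]
  have h2 : ((-1:R)^(i:ℕ)) * ((-1:R)^(i:ℕ)) = 1 := by
    rw [← pow_add]; exact Even.neg_one_pow ⟨(i:ℕ), rfl⟩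
  calc sgnR R t = ((-1:R)^(i:ℕ) * (-1:R)^(i:ℕ)) * sgnR R t := by rw [h2, one_mul]
  _ = (-1:R)^(i:ℕ) * (sgnR R t * (-1:R)^(i:ℕ)) := by ring

lemma face_degen_succ (m : ℕ) (k : Fin m) :
    face X m k.succ ∘ₗ degen X m k = LinearMap.id := by
  unfold face degen
  rw [act_comp, funL3, act_id]

lemma face_degen_cast (m : ℕ) (k : Fin m) :
    face X m (Fin.castSucc k) ∘ₗ degen X m k = LinearMap.id := by
  unfold face degen
  rw [act_comp, funL3', act_id]

lemma face_degen_swap {n k j : ℕ} (hk : k < n) (hj : j < n+1) (hkj : k+1 ≤ j)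
    (hj2 : j+1 < n+2) :
    face X (n+1) ⟨j+1, hj2⟩ ∘ₗ degen X (n+1) ⟨k, by omega⟩
      = degen X n ⟨k, hk⟩ ∘ₗ face X n ⟨j, hj⟩ := by
  unfold face degen
  rw [act_comp, act_comp, funL4 hk hj hkj hj2]

-- ====== batch 5: Bq, Hterm, and the key lemma L5 ======

def Bq (n k j : ℕ) : MM X (n+1) →ₗ[R] MM X (n+1) :=
  if h : k < n ∧ j < n+1 then
    ((-1:R)^(k+j)) • (pmap X (n+1) k ∘ₗ degen X n ⟨k, h.1⟩ ∘ₗ face X n ⟨j, h.2⟩)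
  else 0

def Hterm (m k : ℕ) : MM X m →ₗ[R] MM X (m+1) :=
  if h : k < m then ((-1:R)^k) • (pmap X (m+1) k ∘ₗ degen X m ⟨k, h⟩) else 0

lemma hmap_eq (m : ℕ) : hmap X m = ∑ k ∈ Finset.range m, Hterm X m k := by
  unfold hmap
  rw [← Fin.sum_univ_eq_sum_range (fun k => Hterm X m k) m]
  apply Finset.sum_congr rfl
  intro k _
  unfold Hterm
  rw [dif_pos k.2]

lemma L5 {n kp : ℕ} (hkp : kp < n) :
    ((((kp:ℕ)+2 : R)) * (-1:R)^(kp+1)) •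
        (face X (n+1) 0 ∘ₗ pmap X (n+2) (kp+1) ∘ₗ degen X (n+1) ⟨kp+1, by omega⟩)
      = pmap X (n+1) kp - ∑ j ∈ Finset.range (kp+1), Bq X n kp j := by
  have hcomp : face X (n+1) 0 ∘ₗ pmap X (n+2) (kp+1) ∘ₗ degen X (n+1) ⟨kp+1, by omega⟩
      = ((Nat.factorial (kp+2) : R)⁻¹) • ∑ t : Equiv.Perm (Fin (kp+2)), sgnR R t •
          act X ((fun a : Fin (n+2) => Fin.predAbove (⟨kp+1, by omega⟩ : Fin (n+1)) a)
            ∘ extFun (n+2) (kp+2) (by omega) t ∘ Fin.succAbove (0 : Fin (n+2))) := by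
    rw [pmap_eq X (n+2) (kp+1) (by omega)]
    rw [LinearMap.smul_comp, LinearMap.comp_smul]
    congr 1
    rw [sumComp, compSum]
    apply Finset.sum_congr rfl
    intro t _
    rw [LinearMap.smul_comp, LinearMap.comp_smul]
    congr 1
    unfold face degen
    rw [act_comp, act_comp]
    rfl
  rw [hcomp, smul_smul]
  have hfac2 : (Nat.factorial (kp+1) : R) ≠ 0 :=
    Nat.cast_ne_zero.mpr (Nat.factorial_ne_zero _)
  have hscal : ((((kp:ℕ)+2 : R)) * (-1:R)^(kp+1)) * ((Nat.factorial (kp+2) : R)⁻¹)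
      = (-1:R)^(kp+1) * ((Nat.factorial (kp+1) : R)⁻¹) := by
    have h1 : (Nat.factorial (kp+2) : R) = (((kp:ℕ)+2 : R)) * (Nat.factorial (kp+1) : R) := by
      rw [show kp+2 = (kp+1)+1 from rfl, Nat.factorial_succ]
      push_cast; ring
    have h3 : (((kp:ℕ)+2 : R)) ≠ 0 := by
      have : ((kp+2 : ℕ) : R) ≠ 0 := Nat.cast_ne_zero.mpr (by omega)
      push_cast at this
      exact this
    rw [h1]
    field_simp
  rw [hscal]
  -- reindex the sum over Perm (Fin (kp+2)) by the equivalence EE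
  have hre : (∑ t : Equiv.Perm (Fin (kp+2)), sgnR R t •
        act X ((fun a : Fin (n+2) => Fin.predAbove (⟨kp+1, by omega⟩ : Fin (n+1)) a)
          ∘ extFun (n+2) (kp+2) (by omega) t ∘ Fin.succAbove (0 : Fin (n+2))))
      = ∑ p : Fin (kp+2) × Equiv.Perm (Fin (kp+1)), sgnR R (EE (kp+1) p) •
          act X ((fun a : Fin (n+2) => Fin.predAbove (⟨kp+1, by omega⟩ : Fin (n+1)) a)
            ∘ extFun (n+2) (kp+2) (by omega) (EE (kp+1) p)
            ∘ Fin.succAbove (0 : Fin (n+2))) := by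
    exact (Fintype.sum_equiv (EE (kp+1)) _ _ (fun p => rfl)).symm
  rw [hre, Fintype.sum_prod_type]
  rw [Fin.sum_univ_castSucc
    (f := fun i => ∑ u : Equiv.Perm (Fin (kp+1)), sgnR R (EE (kp+1) (i, u)) •
      act X ((fun a : Fin (n+2) => Fin.predAbove (⟨kp+1, by omega⟩ : Fin (n+1)) a)
        ∘ extFun (n+2) (kp+2) (by omega) (EE (kp+1) (i, u))
        ∘ Fin.succAbove (0 : Fin (n+2))))]
  rw [smul_add]
  have hlastsum : ((-1:R)^(kp+1) * ((Nat.factorial (kp+1) : R)⁻¹)) •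
      (∑ u : Equiv.Perm (Fin (kp+1)), sgnR R (EE (kp+1) (Fin.last (kp+1), u)) •
        act X ((fun a : Fin (n+2) => Fin.predAbove (⟨kp+1, by omega⟩ : Fin (n+1)) a)
          ∘ extFun (n+2) (kp+2) (by omega) (EE (kp+1) (Fin.last (kp+1), u))
          ∘ Fin.succAbove (0 : Fin (n+2))))
      = pmap X (n+1) kp := by
    rw [pmap_eq X (n+1) kp (by omega)]
    rw [Finset.smul_sum, Finset.smul_sum]
    apply Finset.sum_congr rfl
    intro u _
    rw [fid1 hkp u, sgnR_EE, smul_smul, smul_smul]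
    congr 1
    simp only [Fin.val_last]
    ring_nf
    have h4 : ((-1:R))^(kp*2) = 1 := by rw [pow_mul']; norm_num
    rw [h4, mul_one]
  have hcastsum : ((-1:R)^(kp+1) * ((Nat.factorial (kp+1) : R)⁻¹)) •
      (∑ i0 : Fin (kp+1), ∑ u : Equiv.Perm (Fin (kp+1)),
        sgnR R (EE (kp+1) (Fin.castSucc i0, u)) •
        act X ((fun a : Fin (n+2) => Fin.predAbove (⟨kp+1, by omega⟩ : Fin (n+1)) a)
          ∘ extFun (n+2) (kp+2) (by omega) (EE (kp+1) (Fin.castSucc i0, u))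
          ∘ Fin.succAbove (0 : Fin (n+2))))
      = - ∑ j ∈ Finset.range (kp+1), Bq X n kp j := by
    rw [Finset.smul_sum]
    rw [← Fin.sum_univ_eq_sum_range (fun j => Bq X n kp j) (kp+1), ← Finset.sum_neg_distrib]
    apply Finset.sum_congr rfl
    intro i0 _
    -- expand Bq
    have hBq : Bq X n kp (i0 : ℕ) = ((-1:R)^(kp+(i0:ℕ))) •
        (((Nat.factorial (kp+1) : R)⁻¹) • ∑ u : Equiv.Perm (Fin (kp+1)), sgnR R u •
          act X (Fin.succAbove (⟨(i0:ℕ), by omega⟩ : Fin (n+1))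
            ∘ (fun a : Fin (n+1) => Fin.predAbove (⟨kp, hkp⟩ : Fin n) a)
            ∘ extFun (n+1) (kp+1) (by omega) u)) := by
      unfold Bq
      rw [dif_pos ⟨hkp, by omega⟩]
      congr 1
      rw [pmap_eq X (n+1) kp (by omega)]
      rw [LinearMap.smul_comp]
      congr 1
      rw [sumComp]
      apply Finset.sum_congr rfl
      intro u _
      rw [LinearMap.smul_comp]
      congr 1
      unfold face degen
      rw [act_comp, act_comp]
      rfl
    rw [hBq, Finset.smul_sum, smul_smul, Finset.smul_sum, ← Finset.sum_neg_distrib]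
    apply Finset.sum_congr rfl
    intro u _
    rw [fid2 hkp i0 u, sgnR_EE, smul_smul, ← neg_smul, smul_smul]
    congr 1
    simp only [Fin.coe_castSucc]
    rw [pow_add, pow_succ]
    ring
  rw [hlastsum, hcastsum]
  abel

-- ====== batch 6: master lemma ======

lemma neg1sq (i : ℕ) : (-1:R)^i * (-1:R)^i = 1 := by
  rw [← pow_add]; exact Even.neg_one_pow ⟨i, rfl⟩

def Gt (n k : ℕ) (hk1 : k < n+1) (i : ℕ) : MM X (n+1) →ₗ[R] MM X (n+1) :=
  if h : i < n+2 then
    ((-1:R)^(k+i)) • (face X (n+1) ⟨i, h⟩ ∘ₗ pmap X (n+2) k ∘ₗ degen X (n+1) ⟨k, hk1⟩)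
  else 0

lemma stepA (n k : ℕ) (hk1 : k < n+1) :
    del X (n+1) ∘ₗ Hterm X (n+1) k = ∑ i ∈ Finset.range (n+2), Gt X n k hk1 i := by
  unfold Hterm
  rw [dif_pos hk1]
  unfold del
  rw [LinearMap.comp_smul, sumComp, Finset.smul_sum]
  rw [← Fin.sum_univ_eq_sum_range (fun i => Gt X n k hk1 i) (n+2)]
  apply Finset.sum_congr rfl
  intro i _
  rw [LinearMap.smul_comp, smul_smul]
  unfold Gt
  rw [dif_pos i.2, pow_add]

lemma stepC (n k : ℕ) (hk : k ≤ n) (hk1 : k < n+1) :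
    ∑ i ∈ Finset.Ico 0 (k+1), Gt X n k hk1 i
      = (((k+1 : ℕ) : R) * (-1:R)^k) •
          (face X (n+1) 0 ∘ₗ pmap X (n+2) k ∘ₗ degen X (n+1) ⟨k, hk1⟩) := by
  have hconst : ∀ i ∈ Finset.Ico 0 (k+1), Gt X n k hk1 i
      = (-1:R)^k • (face X (n+1) 0 ∘ₗ pmap X (n+2) k ∘ₗ degen X (n+1) ⟨k, hk1⟩) := by
    intro i hi
    have hi2 : i < k+1 := (Finset.mem_Ico.mp hi).2
    have hi3 : i < n+2 := by omega
    unfold Gt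
    rw [dif_pos hi3]
    have hL1 := face_pmap_L1 X (show k ≤ n+1 by omega) ⟨i, hi3⟩ (show ((⟨i,hi3⟩ : Fin (n+2)):ℕ) ≤ k by
      simp only [Fin.val_mk]; omega)
    calc ((-1:R)^(k+i)) • (face X (n+1) ⟨i, hi3⟩ ∘ₗ pmap X (n+2) k ∘ₗ degen X (n+1) ⟨k, hk1⟩)
        = ((-1:R)^(k+i)) • ((face X (n+1) ⟨i, hi3⟩ ∘ₗ pmap X (n+2) k) ∘ₗ degen X (n+1) ⟨k, hk1⟩) := by
          rw [LinearMap.comp_assoc]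
      _ = ((-1:R)^(k+i)) • ((((-1:R)^(((⟨i,hi3⟩ : Fin (n+2)):ℕ))) •
            (face X (n+1) 0 ∘ₗ pmap X (n+2) k)) ∘ₗ degen X (n+1) ⟨k, hk1⟩) := by rw [hL1]
      _ = ((-1:R)^(k+i) * (-1:R)^i) •
            ((face X (n+1) 0 ∘ₗ pmap X (n+2) k) ∘ₗ degen X (n+1) ⟨k, hk1⟩) := by
          rw [LinearMap.smul_comp, smul_smul]
      _ = ((-1:R)^k) • (face X (n+1) 0 ∘ₗ pmap X (n+2) k ∘ₗ degen X (n+1) ⟨k, hk1⟩) := by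
          rw [LinearMap.comp_assoc]
          congr 1
          rw [pow_add, mul_assoc, neg1sq, mul_one]
  rw [Finset.sum_congr rfl hconst, Finset.sum_const, Nat.card_Ico]
  rw [show k+1-0 = k+1 from rfl]
  rw [← Nat.cast_smul_eq_nsmul R (k+1), smul_smul]

lemma stepC' {n k : ℕ} (hk : k ≤ n) (hk1 : k < n+1) :
    (((k+1 : ℕ) : R) * (-1:R)^k) •
        (face X (n+1) 0 ∘ₗ pmap X (n+2) k ∘ₗ degen X (n+1) ⟨k, hk1⟩)
      = if k = 0 then LinearMap.id
        else pmap X (n+1) (k-1) - ∑ j ∈ Finset.range k, Bq X n (k-1) j := by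
  cases k with
  | zero =>
    rw [if_pos rfl]
    rw [pmap_zero X (n+2) (by omega)]
    have hid : face X (n+1) 0 ∘ₗ LinearMap.id ∘ₗ degen X (n+1) ⟨0, hk1⟩ = LinearMap.id := by
      rw [LinearMap.id_comp]
      rw [show (0 : Fin (n+2)) = Fin.castSucc (⟨0, hk1⟩ : Fin (n+1)) from Fin.ext rfl]
      rw [face_degen_cast]
    rw [hid]
    norm_num
  | succ kp =>
    rw [if_neg (by omega)]
    have hkp : kp < n := by omega
    have h5 := L5 X hkp
    rw [show (((kp+1+1 : ℕ)):R) = ((kp:ℕ):R)+2 by push_cast; ring]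
    rw [show kp+1-1 = kp from rfl]
    exact h5

lemma stepD1 (n k : ℕ) (hk : k ≤ n) (hk1 : k < n+1) :
    Gt X n k hk1 (k+1) = - pmap X (n+1) k := by
  unfold Gt
  rw [dif_pos (show k+1 < n+2 by omega)]
  have hcomm := face_pmap_comm X (show k+1 ≤ n+1 by omega) (⟨k+1, by omega⟩ : Fin (n+2))
    (by simp only [Fin.val_mk]; omega)
  calc ((-1:R)^(k+(k+1))) • (face X (n+1) ⟨k+1, by omega⟩ ∘ₗ pmap X (n+2) k ∘ₗ
          degen X (n+1) ⟨k, hk1⟩)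
      = ((-1:R)^(k+(k+1))) • ((face X (n+1) ⟨k+1, by omega⟩ ∘ₗ pmap X (n+2) k) ∘ₗ
          degen X (n+1) ⟨k, hk1⟩) := by rw [LinearMap.comp_assoc]
    _ = ((-1:R)^(k+(k+1))) • ((pmap X (n+1) k ∘ₗ face X (n+1) ⟨k+1, by omega⟩) ∘ₗ
          degen X (n+1) ⟨k, hk1⟩) := by rw [hcomm]
    _ = ((-1:R)^(k+(k+1))) • (pmap X (n+1) k ∘ₗ (face X (n+1) ⟨k+1, by omega⟩ ∘ₗ
          degen X (n+1) ⟨k, hk1⟩)) := by rw [LinearMap.comp_assoc]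
    _ = - pmap X (n+1) k := by
        rw [show (⟨k+1, by omega⟩ : Fin (n+2)) = Fin.succ (⟨k, hk1⟩ : Fin (n+1)) from
          Fin.ext rfl]
        rw [face_degen_succ, LinearMap.comp_id]
        rw [show k+(k+1) = (k+k)+1 from rfl, pow_succ, pow_add, neg1sq, one_mul]
        rw [neg_smul, one_smul]

lemma stepD2 (n k : ℕ) (hk : k ≤ n) (hk1 : k < n+1) :
    ∑ i ∈ Finset.Ico (k+2) (n+2), Gt X n k hk1 i
      = - ∑ j ∈ Finset.Ico (k+1) (n+1), Bq X n k j := by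
  rw [← Finset.sum_neg_distrib]
  rw [Finset.sum_Ico_eq_sum_range, Finset.sum_Ico_eq_sum_range]
  rw [show n+2-(k+2) = n+1-(k+1) by omega]
  apply Finset.sum_congr rfl
  intro l hl
  have hl2 : l < n+1-(k+1) := Finset.mem_range.mp hl
  have hkn : k < n := by omega
  have h1 : k+2+l < n+2 := by omega
  have hj : k+1+l < n+1 := by omega
  have hj2 : (k+1+l)+1 < n+2 := by omega
  unfold Gt Bq
  rw [dif_pos h1, dif_pos ⟨hkn, hj⟩]
  have hface : (⟨k+2+l, h1⟩ : Fin (n+2)) = ⟨(k+1+l)+1, hj2⟩ :=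
    Fin.ext (by show k+2+l = (k+1+l)+1; omega)
  have hcomm := face_pmap_comm X (show k+1 ≤ n+1 by omega) (⟨(k+1+l)+1, hj2⟩ : Fin (n+2))
    (by simp only [Fin.val_mk]; omega)
  calc ((-1:R)^(k+(k+2+l))) • (face X (n+1) ⟨k+2+l, h1⟩ ∘ₗ pmap X (n+2) k ∘ₗ
          degen X (n+1) ⟨k, hk1⟩)
      = ((-1:R)^(k+(k+2+l))) • ((face X (n+1) ⟨(k+1+l)+1, hj2⟩ ∘ₗ pmap X (n+2) k) ∘ₗ
          degen X (n+1) ⟨k, hk1⟩) := by rw [hface, LinearMap.comp_assoc]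
    _ = ((-1:R)^(k+(k+2+l))) • (pmap X (n+1) k ∘ₗ (face X (n+1) ⟨(k+1+l)+1, hj2⟩ ∘ₗ
          degen X (n+1) ⟨k, hk1⟩)) := by rw [hcomm, LinearMap.comp_assoc]
    _ = ((-1:R)^(k+(k+2+l))) • (pmap X (n+1) k ∘ₗ (degen X n ⟨k, hkn⟩ ∘ₗ
          face X n ⟨k+1+l, hj⟩)) := by
        rw [face_degen_swap X hkn hj (by omega) hj2]
    _ = -(((-1:R)^(k+(k+1+l))) • (pmap X (n+1) k ∘ₗ degen X n ⟨k, hkn⟩ ∘ₗ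
          face X n ⟨k+1+l, hj⟩)) := by
        rw [← neg_smul]
        congr 1
        rw [show k+(k+2+l) = (k+(k+1+l))+1 by omega, pow_succ]
        ring

lemma master {n k : ℕ} (hk : k ≤ n) :
    del X (n+1) ∘ₗ Hterm X (n+1) k
      = (if k = 0 then LinearMap.id
          else pmap X (n+1) (k-1) - ∑ j ∈ Finset.range k, Bq X n (k-1) j)
        - pmap X (n+1) k - ∑ j ∈ Finset.Ico (k+1) (n+1), Bq X n k j := by
  have hk1 : k < n+1 := by omega
  rw [stepA X n k hk1]
  rw [Finset.range_eq_Ico,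
    ← Finset.sum_Ico_consecutive (fun i => Gt X n k hk1 i) (Nat.zero_le (k+1))
      (show k+1 ≤ n+2 by omega)]
  rw [← Finset.sum_Ico_consecutive (fun i => Gt X n k hk1 i) (show k+1 ≤ k+2 by omega)
      (show k+2 ≤ n+2 by omega)]
  rw [Finset.sum_Ico_eq_sum_range (f := fun i => Gt X n k hk1 i) (m := k+1) (n := k+2)]
  rw [show k+2-(k+1) = 1 from by omega, Finset.sum_range_one]
  rw [stepC X n k hk hk1, stepC' X hk hk1, stepD1 X n k hk hk1, stepD2 X n k hk hk1]
  abel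

-- ====== batch 7: final assembly ======

lemma hdel_eq (n : ℕ) :
    hmap X n ∘ₗ del X n = ∑ k ∈ Finset.range n, ∑ j ∈ Finset.range (n+1), Bq X n k j := by
  rw [hmap_eq, sumComp]
  apply Finset.sum_congr rfl
  intro k hk
  have hkn : k < n := Finset.mem_range.mp hk
  unfold Hterm
  rw [dif_pos hkn]
  rw [LinearMap.smul_comp]
  unfold del
  rw [compSum, Finset.smul_sum]
  rw [← Fin.sum_univ_eq_sum_range (fun j => Bq X n k j) (n+1)]
  apply Finset.sum_congr rfl
  intro j _
  rw [LinearMap.comp_smul, smul_smul]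
  unfold Bq
  rw [dif_pos (⟨hkn, j.2⟩ : k < n ∧ (j:ℕ) < n+1), pow_add]
  rw [LinearMap.comp_assoc]

lemma delh_eq (n : ℕ) :
    del X (n+1) ∘ₗ hmap X (n+1) = ∑ k ∈ Finset.range (n+1),
      ((if k = 0 then LinearMap.id
          else pmap X (n+1) (k-1) - ∑ j ∈ Finset.range k, Bq X n (k-1) j)
        - pmap X (n+1) k - ∑ j ∈ Finset.Ico (k+1) (n+1), Bq X n k j) := by
  rw [hmap_eq, compSum]
  apply Finset.sum_congr rfl
  intro k hk
  have hkn : k < n+1 := Finset.mem_range.mp hk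
  exact master X (by omega)

end


theorem stmt6 {R : Type} [Field R] [CharZero R] (X : FintypeCatᵒᵖ ⥤ ModuleCat R) :
    ∀ n : ℕ,
      (del X (n + 1)) ∘ₗ (hmap X (n + 1)) + (hmap X n) ∘ₗ (del X n) =
        LinearMap.id - pfull X (n + 1) := by
  intro n
  have hRn : ∑ j ∈ Finset.Ico (n+1) (n+1), Bq X n n j = 0 := by
    rw [Finset.Ico_self, Finset.sum_empty]
  rw [delh_eq X n, hdel_eq X n, pfull_eq X n]
  have hsplit : ∀ k, k < n → ∑ j ∈ Finset.range (n+1), Bq X n k j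
      = ∑ j ∈ Finset.range (k+1), Bq X n k j + ∑ j ∈ Finset.Ico (k+1) (n+1), Bq X n k j := by
    intro k hkn
    have hc : ∑ j ∈ Finset.Ico 0 (k+1), Bq X n k j + ∑ j ∈ Finset.Ico (k+1) (n+1), Bq X n k j
        = ∑ j ∈ Finset.Ico 0 (n+1), Bq X n k j :=
      Finset.sum_Ico_consecutive _ (by omega) (by omega)
    rw [Finset.range_eq_Ico, ← hc, ← Finset.range_eq_Ico]
  rw [Finset.sum_congr rfl (fun k hk => hsplit k (Finset.mem_range.mp hk))]
  rw [Finset.sum_range_succ'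
    (f := fun k => (if k = 0 then LinearMap.id
        else pmap X (n+1) (k-1) - ∑ j ∈ Finset.range k, Bq X n (k-1) j)
      - pmap X (n+1) k - ∑ j ∈ Finset.Ico (k+1) (n+1), Bq X n k j)]
  have hshift : ∀ k, ((if k+1 = 0 then (LinearMap.id : MM X (n+1) →ₗ[R] MM X (n+1))
        else pmap X (n+1) (k+1-1) - ∑ j ∈ Finset.range (k+1), Bq X n (k+1-1) j)
      - pmap X (n+1) (k+1) - ∑ j ∈ Finset.Ico (k+1+1) (n+1), Bq X n (k+1) j)
      = (pmap X (n+1) k - pmap X (n+1) (k+1))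
        + ((∑ j ∈ Finset.Ico (k+1) (n+1), Bq X n k j
            - ∑ j ∈ Finset.Ico (k+2) (n+1), Bq X n (k+1) j)
          - (∑ j ∈ Finset.range (k+1), Bq X n k j
            + ∑ j ∈ Finset.Ico (k+1) (n+1), Bq X n k j)) := by
    intro k
    rw [if_neg (Nat.succ_ne_zero k), show k+1-1 = k from rfl]
    abel
  rw [Finset.sum_congr rfl (fun k _ => hshift k)]
  have hsum : ∑ k ∈ Finset.range n, (pmap X (n+1) k - pmap X (n+1) (k+1) +
      (∑ j ∈ Finset.Ico (k+1) (n+1), Bq X n k j - ∑ j ∈ Finset.Ico (k+2) (n+1), Bq X n (k+1) j -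
        (∑ j ∈ Finset.range (k+1), Bq X n k j + ∑ j ∈ Finset.Ico (k+1) (n+1), Bq X n k j)))
      = (pmap X (n+1) 0 - pmap X (n+1) n)
        + ((∑ j ∈ Finset.Ico (0+1) (n+1), Bq X n 0 j - ∑ j ∈ Finset.Ico (n+1) (n+1), Bq X n n j)
          - ∑ k ∈ Finset.range n, (∑ j ∈ Finset.range (k+1), Bq X n k j
              + ∑ j ∈ Finset.Ico (k+1) (n+1), Bq X n k j)) := by
    rw [Finset.sum_add_distrib]
    rw [Finset.sum_range_sub' (fun k => pmap X (n+1) k) n]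
    rw [Finset.sum_sub_distrib]
    rw [Finset.sum_range_sub' (fun k => ∑ j ∈ Finset.Ico (k+1) (n+1), Bq X n k j) n]
  rw [hsum, if_pos rfl, hRn]
  abel
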